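/- In the gadget graph G above augmented with two new vertices x, y and the two new edges {x, a''}, {y, b''} for a fixed a ∈ A and b ∈ B, the maximum matching of the augmented graph has size |M| + 1 (where M is the perfect matching of G) if and only if a ∩ b ≠ ∅; equivalently, there is an augmenting path with respect to M from x to y iff a ∩ b ≠ ∅. -/

import Mathlib

/-- Vertices of the gadget graph: `Sum.inl (c, false)` is `c_A`,
`Sum.inl (c, true)` is `c_B`, `Sum.inr (Sum.inl (a, false))` is `a'`,
`Sum.inr (Sum.inl (a, true))` is `a''`, and similarly for `b`. -/
abbrev GadgetV (α β γ : Type*) : Type _ := (γ × Bool) ⊕ ((α × Bool) ⊕ (β × Bool))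

/-- Adjacency of the gadget graph: copy edges `{c_A, c_B}`, `{a', a''}`,
`{b', b''}`, together with edges `{a', c_A}` for `c ∈ a` and `{b', c_B}`
for `c ∈ b`. -/
def gadgetAdj {α β γ : Type*} (Sa : α → Set γ) (Sb : β → Set γ)
    (u v : GadgetV α β γ) : Prop :=
  (∃ c, ({u, v} : Set (GadgetV α β γ)) =
      {Sum.inl (c, false), Sum.inl (c, true)}) ∨
  (∃ a, ({u, v} : Set (GadgetV α β γ)) =
      {Sum.inr (Sum.inl (a, false)), Sum.inr (Sum.inl (a, true))}) ∨
  (∃ b, ({u, v} : Set (GadgetV α β γ)) =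
      {Sum.inr (Sum.inr (b, false)), Sum.inr (Sum.inr (b, true))}) ∨
  (∃ a c, c ∈ Sa a ∧ ({u, v} : Set (GadgetV α β γ)) =
      {Sum.inr (Sum.inl (a, false)), Sum.inl (c, false)}) ∨
  (∃ b c, c ∈ Sb b ∧ ({u, v} : Set (GadgetV α β γ)) =
      {Sum.inr (Sum.inr (b, false)), Sum.inl (c, true)})

/-- Vertices of the augmented gadget graph: the old vertices, plus
`x = Sum.inr false` and `y = Sum.inr true`. -/
abbrev AugV (α β γ : Type*) : Type _ := GadgetV α β γ ⊕ Bool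

open Classical in
/-- partner function for the perfect matching when `c ∈ Sa a0 ∩ Sb b0`. -/
noncomputable def gadgetPartner {α β γ : Type*} (a0 : α) (b0 : β) (c : γ) :
    AugV α β γ → AugV α β γ
  | Sum.inr false => Sum.inl (Sum.inr (Sum.inl (a0, true)))
  | Sum.inr true => Sum.inl (Sum.inr (Sum.inr (b0, true)))
  | Sum.inl (Sum.inr (Sum.inl (a, true))) =>
      if a = a0 then Sum.inr false else Sum.inl (Sum.inr (Sum.inl (a, false)))
  | Sum.inl (Sum.inr (Sum.inl (a, false))) =>
      if a = a0 then Sum.inl (Sum.inl (c, false)) else Sum.inl (Sum.inr (Sum.inl (a, true)))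
  | Sum.inl (Sum.inr (Sum.inr (b, true))) =>
      if b = b0 then Sum.inr true else Sum.inl (Sum.inr (Sum.inr (b, false)))
  | Sum.inl (Sum.inr (Sum.inr (b, false))) =>
      if b = b0 then Sum.inl (Sum.inl (c, true)) else Sum.inl (Sum.inr (Sum.inr (b, true)))
  | Sum.inl (Sum.inl (c', false)) =>
      if c' = c then Sum.inl (Sum.inr (Sum.inl (a0, false))) else Sum.inl (Sum.inl (c', true))
  | Sum.inl (Sum.inl (c', true)) =>
      if c' = c then Sum.inl (Sum.inr (Sum.inr (b0, false))) else Sum.inl (Sum.inl (c', false))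

lemma gadgetPartner_invol {α β γ : Type*} (a0 : α) (b0 : β) (c : γ)
    (v : AugV α β γ) : gadgetPartner a0 b0 c (gadgetPartner a0 b0 c v) = v := by
  rcases v with (⟨c', _ | _⟩ | ⟨a, _ | _⟩ | ⟨b, _ | _⟩) | _ | _ <;>
    simp only [gadgetPartner] <;> split_ifs <;> simp_all [gadgetPartner]

set_option maxHeartbeats 1600000 in
/-- Since the gadget graph has a perfect matching `M` of size `|V|/2`, the
maximum matching of the augmented graph (with the new edges `{x, a''}` and
`{y, b''}`) has size `|M| + 1` iff the augmented graph has a perfect matching.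
This happens iff `a ∩ b ≠ ∅`, i.e. iff there is an `M`-augmenting path
from `x` to `y`. -/
theorem stmt14 {α β γ : Type*} (Sa : α → Set γ) (Sb : β → Set γ)
    (a0 : α) (b0 : β) (G' : SimpleGraph (AugV α β γ))
    (hG' : ∀ u v, G'.Adj u v ↔
      ((∃ u' v' : GadgetV α β γ, u = Sum.inl u' ∧ v = Sum.inl v' ∧
          gadgetAdj Sa Sb u' v') ∨
       ({u, v} : Set (AugV α β γ)) =
          {Sum.inr false, Sum.inl (Sum.inr (Sum.inl (a0, true)))} ∨
       ({u, v} : Set (AugV α β γ)) =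
          {Sum.inr true, Sum.inl (Sum.inr (Sum.inr (b0, true)))})) :
    (∃ M' : G'.Subgraph, M'.IsPerfectMatching) ↔
      ∃ c, c ∈ Sa a0 ∧ c ∈ Sb b0 := by
  constructor
  · rintro ⟨M', hm, hs⟩
    have key : ∀ v w w', M'.Adj v w → M'.Adj v w' → w = w' :=
      fun v w w' h1 h2 => (hm (hs v)).unique h1 h2
    -- y is matched to b0''
    obtain ⟨w0, hw0, -⟩ := hm (hs (Sum.inr true))
    have h0 := (hG' _ _).1 hw0.adj_sub
    simp only [gadgetAdj, Set.pair_eq_pair_iff] at h0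
    simp at h0
    subst h0
    -- b0' is matched to some c'_B with c' ∈ Sb b0
    obtain ⟨w1, hw1, -⟩ := hm (hs (Sum.inl (Sum.inr (Sum.inr (b0, false)))))
    have h1 := (hG' _ _).1 hw1.adj_sub
    simp only [gadgetAdj, Set.pair_eq_pair_iff] at h1
    simp at h1
    rcases h1 with ⟨c', hc', hcb⟩ | h1
    · -- c'_A is matched to some a' with c' ∈ Sa a
      subst hc'
      obtain ⟨w2, hw2, -⟩ := hm (hs (Sum.inl (Sum.inl (c', false))))
      have h2 := (hG' _ _).1 hw2.adj_sub
      simp only [gadgetAdj, Set.pair_eq_pair_iff] at h2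
      simp at h2
      rcases h2 with h2 | ⟨a, ha, hc2⟩
      · -- c'_A matched to c'_B, contradiction with b0'–c'_B
        subst h2
        have := key _ _ _ hw2.symm hw1.symm
        simp at this
      · subst ha
        -- a1'' is matched to w3
        obtain ⟨w3, hw3, -⟩ := hm (hs (Sum.inl (Sum.inr (Sum.inl (a, true)))))
        have h3 := (hG' _ _).1 hw3.adj_sub
        simp only [gadgetAdj, Set.pair_eq_pair_iff] at h3
        simp at h3
        rcases h3 with h3 | ⟨ha0, hx⟩
        · -- a1'' matched to a1', contradiction with c2_A–a1'
          subst h3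
          have := key _ _ _ hw3.symm hw2.symm
          simp at this
        · exact ⟨c', ha0 ▸ hc2, hcb⟩
    · -- b0' matched to b0'', contradiction with y–b0''
      subst h1
      have := key _ _ _ hw1.symm hw0.symm
      simp at this
  · rintro ⟨c, hca, hcb⟩
    have hadj : ∀ v, G'.Adj v (gadgetPartner a0 b0 c v) := by
      intro v
      rw [hG']
      clear hG'
      rcases v with (⟨c', _ | _⟩ | ⟨a, _ | _⟩ | ⟨b, _ | _⟩) | _ | _ <;>
        simp only [gadgetPartner] <;> (try split_ifs) <;> subst_vars <;>
        simp [gadgetAdj, Set.pair_eq_pair_iff] <;> tauto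
    refine ⟨{ verts := Set.univ
              Adj := fun u v => gadgetPartner a0 b0 c u = v ∧ gadgetPartner a0 b0 c v = u
              adj_sub := fun {u v} h => h.1 ▸ hadj u
              edge_vert := fun _ => trivial
              symm := ⟨fun u v h => ⟨h.2, h.1⟩⟩ }, ?_, fun v => trivial⟩
    intro v _
    exact ⟨gadgetPartner a0 b0 c v, ⟨rfl, gadgetPartner_invol a0 b0 c v⟩,
      fun w hw => hw.1.symm⟩
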